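/- arXiv:2306.14543 — 5 statements merged into one kernel-verified Lean document; each statement's English description precedes it below -/
import Mathlib

section
/- Let I be a finite index set and for each i ∈ I let (c_i, d_i) ∈ ℝⁿ × ℝ^m. Let Y := {(x, u) ∈ ℝⁿ × ℝ^m : ∀ i ∈ I, ⟨c_i, x⟩ + ⟨d_i, u⟩ ≤ 1}, let S be a nonempty compact subset of ℝⁿ, let K be a real m×n matrix, and define Y_S := {(z, v) ∈ ℝⁿ × ℝ^m : ∀ s ∈ S, (z + s, v + K s) ∈ Y}. Then Y_S = {(z, v) ∈ ℝⁿ × ℝ^m : ∀ i ∈ I, ⟨c_i, z⟩ + ⟨d_i, v⟩ ≤ 1 − σ_S(c_i + Kᵀ d_i)}. (Proposition 3.1, representation part) -/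
open Matrix Pointwise

/-- The support function of a nonempty set `S ⊆ ℝⁿ` evaluated at `y`:
`σ_S(y) = sup_{s ∈ S} ⟨y, s⟩`. -/
noncomputable def suppFn {n : ℕ} (S : Set (Fin n → ℝ)) (y : Fin n → ℝ) : ℝ :=
  sSup ((fun s => y ⬝ᵥ s) '' S)

/-- Proposition 3.1 (representation part): the tightened constraint set `Y_S`
admits the explicit polyhedral representation via support function offsets. -/
theorem tightened_set_representation {n m : ℕ} {ι : Type} [Fintype ι]
    (c : ι → Fin n → ℝ) (d : ι → Fin m → ℝ)
    (Y : Set ((Fin n → ℝ) × (Fin m → ℝ)))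
    (hY : Y = {p : (Fin n → ℝ) × (Fin m → ℝ) | ∀ i, c i ⬝ᵥ p.1 + d i ⬝ᵥ p.2 ≤ 1})
    (S : Set (Fin n → ℝ)) (hSne : S.Nonempty) (hScp : IsCompact S)
    (K : Matrix (Fin m) (Fin n) ℝ) :
    {p : (Fin n → ℝ) × (Fin m → ℝ) | ∀ s ∈ S, (p.1 + s, p.2 + K.mulVec s) ∈ Y} =
      {p : (Fin n → ℝ) × (Fin m → ℝ) |
        ∀ i, c i ⬝ᵥ p.1 + d i ⬝ᵥ p.2 ≤ 1 - suppFn S (c i + Kᵀ.mulVec (d i))} := by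
  subst hY
  have key : ∀ (i : ι) (p : (Fin n → ℝ) × (Fin m → ℝ)) (s : Fin n → ℝ),
      c i ⬝ᵥ (p.1 + s) + d i ⬝ᵥ (p.2 + K.mulVec s)
        = c i ⬝ᵥ p.1 + d i ⬝ᵥ p.2 + (c i + Kᵀ.mulVec (d i)) ⬝ᵥ s := by
    intro i p s
    simp [dotProduct_add, add_dotProduct, dotProduct_mulVec, vecMul_transpose,
      mulVec_transpose]
    ring
  ext p
  simp only [Set.mem_setOf_eq]
  constructor
  · intro h i
    rw [le_sub_iff_add_le, add_comm, ← le_sub_iff_add_le]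
    apply csSup_le (hSne.image _)
    rintro x ⟨s, hs, rfl⟩
    have := h s hs i
    rw [key] at this
    linarith
  · intro h s hs i
    rw [key]
    have hb : BddAbove ((fun s => (c i + Kᵀ.mulVec (d i)) ⬝ᵥ s) '' S) := by
      apply (hScp.image ?_).bddAbove
      unfold dotProduct
      exact continuous_finset_sum _ fun j _ => (continuous_const.mul (continuous_apply j))
    have hle : (c i + Kᵀ.mulVec (d i)) ⬝ᵥ s ≤ suppFn S (c i + Kᵀ.mulVec (d i)) :=
      le_csSup hb ⟨s, hs, rfl⟩
    have := h i
    unfold suppFn at *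
    linarith
end

section
/- Let W be a compact convex subset of ℝⁿ containing the origin, let M be a real n×n matrix, let α ∈ [0, 1), and let N ≥ 1 be a finite natural number such that M^N W ⊆ α W. Then the set S := (1 − α)^{-1} ⊕_{k=0}^{N − 1} M^k W is robust positively invariant for the dynamics s⁺ = M s + w with w ∈ W, i.e., M S ⊕ W ⊆ S. (Theorem 1 of Raković–Kerrigan–Kouramas–Mayne, used in Section 3.3 to guarantee rigid tube dynamical consistency) -/
open Matrix Pointwise

/-- Theorem 1 of Raković–Kerrigan–Kouramas–Mayne: if `M^N W ⊆ α W` then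
`S = (1-α)⁻¹ ⊕_{k=0}^{N-1} M^k W` is robust positively invariant for
`s⁺ = M s + w`, `w ∈ W`, i.e., `M S ⊕ W ⊆ S`. -/
theorem rpi_shape_set {n : ℕ} (W : Set (Fin n → ℝ))
    (hWcp : IsCompact W) (hWconv : Convex ℝ W) (h0 : (0 : Fin n → ℝ) ∈ W)
    (M : Matrix (Fin n) (Fin n) ℝ) (α : ℝ) (hα0 : 0 ≤ α) (hα1 : α < 1)
    (N : ℕ) (hN : 1 ≤ N)
    (hMN : (fun w => (M ^ N).mulVec w) '' W ⊆ α • W)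
    (S : Set (Fin n → ℝ))
    (hS : S = (1 - α)⁻¹ • ∑ k ∈ Finset.range N, (fun w => (M ^ k).mulVec w) '' W) :
    (fun s => M.mulVec s) '' S + W ⊆ S := by
  classical
  obtain ⟨N', rfl⟩ : ∃ N', N = N' + 1 := ⟨N - 1, (Nat.succ_pred_eq_of_pos hN).symm⟩
  subst hS
  have hc : (1 - α) ≠ 0 := by linarith
  rintro x ⟨-, ⟨s, hs, rfl⟩, w, hw, rfl⟩
  obtain ⟨t, ht, rfl⟩ := hs
  rw [Set.mem_finset_sum] at ht
  obtain ⟨g, hg, hgt⟩ := ht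
  -- choose u k ∈ W with M^k u k = g k for k ≤ N'
  have hgu : ∀ k, ∃ v, k ∈ Finset.range (N' + 1) →
      v ∈ W ∧ (M ^ k).mulVec v = g k := by
    intro k
    by_cases hk : k ∈ Finset.range (N' + 1)
    · obtain ⟨v, hv, hv'⟩ := hg hk
      exact ⟨v, fun _ => ⟨hv, hv'⟩⟩
    · exact ⟨0, fun h => absurd h hk⟩
  choose u hu using hgu
  have huW : ∀ k ∈ Finset.range (N' + 1), u k ∈ W := fun k hk => (hu k hk).1
  have hug : ∀ k ∈ Finset.range (N' + 1), (M ^ k).mulVec (u k) = g k :=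
    fun k hk => (hu k hk).2
  -- M^{N'+1} u_{N'} ∈ α • W
  obtain ⟨w', hw', hw'eq⟩ :=
    hMN ⟨u N', huW N' (Finset.self_mem_range_succ N'), rfl⟩
  set v₀ : Fin n → ℝ := α • w' + (1 - α) • w with hv₀
  have hv₀W : v₀ ∈ W := hWconv hw' hw hα0 (by linarith) (by ring)
  set g' : ℕ → (Fin n → ℝ) := fun k =>
    if k = 0 then v₀ else (M ^ k).mulVec (u (k - 1)) with hg'
  refine ⟨∑ k ∈ Finset.range (N' + 1), g' k, ?_, ?_⟩
  · rw [Set.mem_finset_sum]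
    refine ⟨g', fun {k} hk => ?_, rfl⟩
    by_cases hk0 : k = 0
    · subst hk0
      exact ⟨v₀, hv₀W, by simp [hg', Matrix.one_mulVec]⟩
    · refine ⟨u (k - 1), huW _ ?_, by simp [hg', hk0]⟩
      rw [Finset.mem_range] at hk ⊢; omega
  · -- the algebraic identity
    have hMt : M.mulVec t =
        (∑ k ∈ Finset.range N', (M ^ (k + 1)).mulVec (u k))
          + (M ^ (N' + 1)).mulVec (u N') := by
      have : M.mulVec t = ∑ k ∈ Finset.range (N' + 1), (M ^ (k + 1)).mulVec (u k) := by
        have hms := map_sum (Matrix.mulVecLin M) g (Finset.range (N' + 1))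
        simp only [Matrix.mulVecLin_apply] at hms
        rw [← hgt, hms]
        refine Finset.sum_congr rfl fun k hk => ?_
        rw [← hug k hk, Matrix.mulVec_mulVec, ← pow_succ']
      rw [this, Finset.sum_range_succ]
    have hsum : ∑ k ∈ Finset.range (N' + 1), g' k =
        v₀ + ∑ k ∈ Finset.range N', (M ^ (k + 1)).mulVec (u k) := by
      rw [Finset.sum_range_succ']
      simp only [hg', Nat.succ_ne_zero, if_false, Nat.add_sub_cancel, if_pos rfl]
      rw [add_comm]
    simp only at hw'eq
    show (1 - α)⁻¹ • (∑ k ∈ Finset.range (N' + 1), g' k)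
      = M.mulVec ((1 - α)⁻¹ • t) + w
    rw [hsum, Matrix.mulVec_smul, hMt, ← hw'eq, hv₀, smul_add, smul_add,
      smul_add, smul_smul ((1:ℝ) - α)⁻¹ (1 - α), inv_mul_cancel₀ hc, one_smul]
    abel
end

section
/- Let Z be a subset of ℝⁿ, let C be a real n×n matrix, and let N ∈ ℕ be such that ⋂_{k=0}^{N} C^{-k} Z ⊆ C^{-(N+1)} Z. Then the set Z_f := ⋂_{k=0}^{N} C^{-k} Z satisfies: (i) Z_f is positively invariant for the dynamics z⁺ = C z, i.e., C Z_f ⊆ Z_f; and (ii) Z_f = ⋂_{k=0}^{∞} C^{-k} Z, i.e., Z_f is finitely determined. (Finite determination and positive invariance of the terminal constraint set Z_f under condition (2.17)) -/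
open Matrix Pointwise

/-- Finite determination and positive invariance of the terminal constraint set `Z_f`
under condition (2.17): if `⋂_{k=0}^{N} C^{-k} Z ⊆ C^{-(N+1)} Z`, then
`Z_f = ⋂_{k=0}^{N} C^{-k} Z` satisfies `C Z_f ⊆ Z_f` and
`Z_f = ⋂_{k=0}^{∞} C^{-k} Z`. -/
theorem terminal_set_finitely_determined {n : ℕ} (Z : Set (Fin n → ℝ))
    (C : Matrix (Fin n) (Fin n) ℝ) (N : ℕ)
    (h : (⋂ k ∈ Finset.range (N + 1), (C ^ k).mulVec ⁻¹' Z) ⊆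
      (C ^ (N + 1)).mulVec ⁻¹' Z) :
    ((fun z => C.mulVec z) '' (⋂ k ∈ Finset.range (N + 1), (C ^ k).mulVec ⁻¹' Z) ⊆
        ⋂ k ∈ Finset.range (N + 1), (C ^ k).mulVec ⁻¹' Z) ∧
      (⋂ k ∈ Finset.range (N + 1), (C ^ k).mulVec ⁻¹' Z) =
        ⋂ k : ℕ, (C ^ k).mulVec ⁻¹' Z := by
  have inv : ∀ y ∈ (⋂ k ∈ Finset.range (N + 1), (C ^ k).mulVec ⁻¹' Z),
      C.mulVec y ∈ (⋂ k ∈ Finset.range (N + 1), (C ^ k).mulVec ⁻¹' Z) := by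
    intro y hy
    have hy' := hy
    simp only [Set.mem_iInter, Set.mem_preimage, Finset.mem_range] at hy ⊢
    intro i hi
    have e : (C ^ i).mulVec (C.mulVec y) = (C ^ (i + 1)).mulVec y := by
      rw [pow_succ, Matrix.mulVec_mulVec]
    rw [e]
    rcases Nat.lt_or_ge (i + 1) (N + 1) with h1 | h1
    · exact hy _ h1
    · have hiN : i + 1 = N + 1 := by omega
      rw [hiN]
      exact h hy'
  have iter : ∀ y ∈ (⋂ k ∈ Finset.range (N + 1), (C ^ k).mulVec ⁻¹' Z), ∀ k : ℕ,
      (C ^ k).mulVec y ∈ (⋂ j ∈ Finset.range (N + 1), (C ^ j).mulVec ⁻¹' Z) := by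
    intro y hy k
    induction k with
    | zero => simpa [Matrix.one_mulVec] using hy
    | succ k ih =>
        have e : (C ^ (k + 1)).mulVec y = C.mulVec ((C ^ k).mulVec y) := by
          rw [pow_succ', Matrix.mulVec_mulVec]
        rw [e]
        exact inv _ ih
  constructor
  · rintro x ⟨y, hy, rfl⟩
    exact inv y hy
  · apply Set.Subset.antisymm
    · intro y hy
      refine Set.mem_iInter.2 fun k => ?_
      have := iter y hy k
      simp only [Set.mem_iInter, Set.mem_preimage, Finset.mem_range] at this
      have h0 := this 0 (Nat.succ_pos N)
      simpa [Matrix.one_mulVec] using h0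
    · intro y hy
      simp only [Set.mem_iInter, Set.mem_preimage, Finset.mem_range] at hy ⊢
      intro i _
      exact hy i
end

section
/- Let A be a real n×n matrix, B a real n×m matrix, K a real m×n matrix, and let S, W ⊆ ℝⁿ and Y ⊆ ℝⁿ × ℝ^m be sets such that (A + B K) S ⊕ W ⊆ S. Define Y_S := {(z, v) ∈ ℝⁿ × ℝ^m : ∀ s ∈ S, (z + s, v + K s) ∈ Y}. Suppose x ∈ ℝⁿ, z ∈ ℝⁿ and v ∈ ℝ^m satisfy x − z ∈ S and (z, v) ∈ Y_S, and set u := v + K (x − z). Then (x, u) ∈ Y, and for every w ∈ W, the successor state x⁺ := A x + B u + w satisfies x⁺ − (A z + B v) ∈ S. (Core robust constraint satisfaction and tube dynamical consistency step used in the proof of Theorem 4.2) -/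
open Matrix Pointwise

/-- Core robust constraint satisfaction and tube dynamical consistency step used in
the proof of Theorem 4.2: if `(A + BK) S ⊕ W ⊆ S`, `x - z ∈ S` and `(z, v) ∈ Y_S`,
then with `u = v + K (x - z)` one has `(x, u) ∈ Y` and, for every `w ∈ W`, the
successor `x⁺ = A x + B u + w` satisfies `x⁺ - (A z + B v) ∈ S`. -/
theorem tube_consistency_step {n m : ℕ}
    (A : Matrix (Fin n) (Fin n) ℝ) (B : Matrix (Fin n) (Fin m) ℝ)
    (K : Matrix (Fin m) (Fin n) ℝ)
    (S W : Set (Fin n → ℝ)) (Y : Set ((Fin n → ℝ) × (Fin m → ℝ)))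
    (hinv : (fun s => (A + B * K).mulVec s) '' S + W ⊆ S)
    (x z : Fin n → ℝ) (v : Fin m → ℝ)
    (hxz : x - z ∈ S)
    (hzv : (z, v) ∈ {p : (Fin n → ℝ) × (Fin m → ℝ) |
      ∀ s ∈ S, (p.1 + s, p.2 + K.mulVec s) ∈ Y}) :
    (x, v + K.mulVec (x - z)) ∈ Y ∧
      ∀ w ∈ W,
        (A.mulVec x + B.mulVec (v + K.mulVec (x - z)) + w) -
          (A.mulVec z + B.mulVec v) ∈ S := by
  constructor
  · have h := hzv (x - z) hxz
    simpa using h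
  · intro w hw
    apply hinv
    refine ⟨(A + B * K).mulVec (x - z), ⟨x - z, hxz, rfl⟩, w, hw, ?_⟩
    simp [Matrix.add_mulVec, Matrix.mulVec_sub, Matrix.mulVec_add, Matrix.mulVec_mulVec]
    abel
end

section
/- Let P be a nonempty convex subset of ℝⁿ, let f : ℝⁿ → ℝ^m be continuous on P, and suppose there exist finitely many closed sets C₁, …, C_r ⊆ ℝⁿ, affine maps g₁, …, g_r : ℝⁿ → ℝ^m, and Lipschitz constants L₁, …, L_r ≥ 0 such that P ⊆ ⋃_{i=1}^{r} C_i, each g_i is Lipschitz with constant L_i, and f(x) = g_i(x) for every x ∈ C_i ∩ P. Then f is Lipschitz continuous on P with Lipschitz constant max_i L_i. (Continuous piecewise affine functions on a convex polyhedral domain are Lipschitz; the fact underlying Corollary 4.1) -/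
/-- Continuous piecewise affine functions on a convex domain are Lipschitz (the fact
underlying Corollary 4.1): if a function `f`, continuous on a nonempty convex set
`P` covered by finitely many closed sets `C₁, …, C_r`, agrees on each `C_i ∩ P`
with an affine map `g_i` that is Lipschitz with constant `L_i`, then `f` is
Lipschitz on `P` with constant `max_i L_i`. -/
theorem piecewise_affine_lipschitz {n m : ℕ}
    (P : Set (EuclideanSpace ℝ (Fin n))) (hPne : P.Nonempty) (hPconv : Convex ℝ P)
    (f : EuclideanSpace ℝ (Fin n) → EuclideanSpace ℝ (Fin m))
    (hf : ContinuousOn f P)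
    (r : ℕ) (C : Fin r → Set (EuclideanSpace ℝ (Fin n)))
    (hCcl : ∀ i, IsClosed (C i))
    (g : Fin r → (EuclideanSpace ℝ (Fin n) →ᵃ[ℝ] EuclideanSpace ℝ (Fin m)))
    (L : Fin r → NNReal)
    (hcover : P ⊆ ⋃ i, C i)
    (hLip : ∀ i, LipschitzWith (L i) (g i))
    (hagree : ∀ i, ∀ x ∈ C i ∩ P, f x = g i x) :
    LipschitzOnWith (Finset.univ.sup L) f P := by
  rw [lipschitzOnWith_iff_dist_le_mul]
  intro x hx y hy
  set K : ℝ := ((Finset.univ.sup L : NNReal) : ℝ) with hK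
  have hK0 : 0 ≤ K := (Finset.univ.sup L).coe_nonneg
  set γ : ℝ → EuclideanSpace ℝ (Fin n) := fun t => AffineMap.lineMap x y t with hγ
  have hγc : Continuous γ := (AffineMap.lineMap (k := ℝ) x y).continuous_of_finiteDimensional
  have hγmem : ∀ t ∈ Set.Icc (0:ℝ) 1, γ t ∈ P := fun t ht => hPconv.lineMap_mem hx hy ht
  have hγ0 : γ 0 = x := AffineMap.lineMap_apply_zero x y
  have hγ1 : γ 1 = y := AffineMap.lineMap_apply_one x y
  have hγdist : ∀ s t : ℝ, dist (γ s) (γ t) = |s - t| * dist x y := fun s t =>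
    dist_lineMap_lineMap x y s t
  set d : ℝ := dist x y with hd
  set S : Set ℝ := {t | t ∈ Set.Icc (0:ℝ) 1 ∧ dist (f (γ t)) (f x) ≤ K * t * d} with hS
  have hScl : IsClosed S := by
    have hcont : ContinuousOn (fun t => dist (f (γ t)) (f x) - K * t * d) (Set.Icc (0:ℝ) 1) := by
      apply ContinuousOn.sub
      · exact (continuous_dist.comp_continuousOn ((hf.comp hγc.continuousOn hγmem).prodMk continuousOn_const))
      · exact (continuous_const.mul continuous_id).mul continuous_const |>.continuousOn
    have : S = Set.Icc (0:ℝ) 1 ∩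
        (fun t => dist (f (γ t)) (f x) - K * t * d) ⁻¹' Set.Iic 0 := by
      ext t
      simp [hS, sub_nonpos, and_comm]
    rw [this]
    exact hcont.preimage_isClosed_of_isClosed isClosed_Icc isClosed_Iic
  have hS0 : (0:ℝ) ∈ S := by
    constructor
    · exact Set.left_mem_Icc.2 zero_le_one
    · simp [hγ0]
  have hSne : S.Nonempty := ⟨0, hS0⟩
  have hSbdd : BddAbove S := ⟨1, fun t ht => ht.1.2⟩
  set T : ℝ := sSup S with hT
  have hTS : T ∈ S := hScl.csSup_mem hSne hSbdd
  have hT1 : T = 1 := by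
    by_contra hne
    have hTlt : T < 1 := lt_of_le_of_ne hTS.1.2 hne
    -- sets A i
    set A : Fin r → Set ℝ := fun i => γ ⁻¹' (C i) ∩ Set.Icc (0:ℝ) 1 with hA
    have hAcl : ∀ i, IsClosed (A i) := fun i =>
      ((hCcl i).preimage hγc).inter isClosed_Icc
    have hsub : Set.Ioc T 1 ⊆ ⋃ i, (A i ∩ Set.Ioc T 1) := by
      intro t ht
      have ht01 : t ∈ Set.Icc (0:ℝ) 1 := ⟨le_of_lt (lt_of_le_of_lt hTS.1.1 ht.1), ht.2⟩
      obtain ⟨s, ⟨i, rfl⟩, hmem⟩ := hcover (hγmem t ht01)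
      exact Set.mem_iUnion.2 ⟨i, ⟨hmem, ht01⟩, ht⟩
    have hTcl : T ∈ closure (Set.Ioc T 1) := by
      rw [closure_Ioc hTlt.ne]
      exact ⟨le_refl T, hTlt.le⟩
    have hclosed : IsClosed (⋃ i, closure (A i ∩ Set.Ioc T 1)) :=
      isClosed_iUnion_of_finite fun i => isClosed_closure
    have hTmem : T ∈ ⋃ i, closure (A i ∩ Set.Ioc T 1) := by
      refine closure_minimal ?_ hclosed hTcl
      exact hsub.trans (Set.iUnion_mono fun i => subset_closure)
    obtain ⟨_, ⟨i, rfl⟩, hTi⟩ := hTmem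
    have hTA : T ∈ A i := (hAcl i).closure_subset
      ((closure_mono Set.inter_subset_left) hTi)
    obtain ⟨t, htA, htIoc⟩ : (A i ∩ Set.Ioc T 1).Nonempty :=
      closure_nonempty_iff.1 ⟨T, hTi⟩
    -- L i ≤ K
    have hLK : ((L i : NNReal) : ℝ) ≤ K :=
      NNReal.coe_le_coe.2 (Finset.le_sup (Finset.mem_univ i))
    have hfT : f (γ T) = g i (γ T) := hagree i _ ⟨hTA.1, hγmem T hTA.2⟩
    have hft : f (γ t) = g i (γ t) := hagree i _ ⟨htA.1, hγmem t htA.2⟩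
    have hstep : dist (f (γ t)) (f (γ T)) ≤ K * (t - T) * d := by
      rw [hft, hfT]
      calc dist (g i (γ t)) (g i (γ T)) ≤ (L i : ℝ) * dist (γ t) (γ T) :=
            (hLip i).dist_le_mul _ _
        _ = (L i : ℝ) * (|t - T| * d) := by rw [hγdist]
        _ ≤ K * ((t - T) * d) := by
            rw [abs_of_nonneg (sub_nonneg.2 htIoc.1.le)]
            exact mul_le_mul hLK le_rfl (mul_nonneg (sub_nonneg.2 htIoc.1.le) dist_nonneg)
              hK0
        _ = K * (t - T) * d := by ring
    have htS : t ∈ S := by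
      refine ⟨htA.2, ?_⟩
      calc dist (f (γ t)) (f x) ≤ dist (f (γ t)) (f (γ T)) + dist (f (γ T)) (f x) :=
            dist_triangle _ _ _
        _ ≤ K * (t - T) * d + K * T * d := add_le_add hstep hTS.2
        _ = K * t * d := by ring
    exact absurd (le_csSup hSbdd htS) (not_le.2 htIoc.1)
  have := hTS.2
  rw [hT1, hγ1] at this
  calc dist (f x) (f y) = dist (f y) (f x) := dist_comm _ _
    _ ≤ K * 1 * d := this
    _ = K * dist x y := by rw [hd]; ring
end
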